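/- Let h > 0. The sesquilinear form on ℂ[z] determined by ⟨z^n, z^m⟩ = 0 for n ≠ m and ⟨z^n, z^n⟩ = n!·(2h)(2h+1)⋯(2h+n−1) is a positive definite inner product and is contravariant: ⟨l_i p, q⟩ = ⟨p, l_{−i} q⟩ for all i ∈ {−1, 0, 1} and all p, q ∈ ℂ[z] (the Verma module V_h over sl(2,ℂ) is unitarizable for h > 0). -/
import Mathlib


open Polynomial

noncomputable section

/-- Multiplication by `X` (the operator `l₋₁`). -/
def mulX : Module.End ℂ (Polynomial ℂ) := LinearMap.mulLeft ℂ (X : Polynomial ℂ)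

/-- The differentiation operator `d/dz` (the operator `D`). -/
def der : Module.End ℂ (Polynomial ℂ) := Polynomial.derivative

/-- The generators `l₋₁, l₀, l₁` of `sl(2,ℂ)` acting on the Verma module `V_h ≅ ℂ[z]`. -/
def lgen (h : ℝ) (i : ℤ) : Module.End ℂ (Polynomial ℂ) :=
  if i = -1 then mulX
  else if i = 0 then mulX * der + (h : ℂ) • 1
  else if i = 1 then mulX * der * der + ((2 * h : ℝ) : ℂ) • der
  else 0

/-- The operator `F`, `F zⁿ = zⁿ⁺¹/(n+2h)`. -/
def Fop (h : ℝ) : Module.End ℂ (Polynomial ℂ) :=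
  (Polynomial.basisMonomials ℂ).constr ℂ fun n =>
    (((n : ℂ) + 2 * (h : ℂ))⁻¹) • (X : Polynomial ℂ) ^ (n + 1)

/-- The `q_R`-conformal symmetries `L_k` (`k ∈ ℤ`) acting on `ℂ[z]`. -/
def Lop (h : ℝ) (k : ℤ) : Module.End ℂ (Polynomial ℂ) :=
  (Polynomial.basisMonomials ℂ).constr ℂ fun n =>
    if 0 ≤ k then
      ((((n : ℂ) - (k : ℂ)) + ((k : ℂ) + 1) * (h : ℂ)) * (n.descFactorial k.toNat : ℂ)) •
        (X : Polynomial ℂ) ^ (n - k.toNat)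
    else
      (((n : ℂ) + (((-k).toNat : ℂ) + 1) * (h : ℂ)) /
          ∏ j ∈ Finset.range (-k).toNat, ((n : ℂ) + 2 * (h : ℂ) + (j : ℂ))) •
        (X : Polynomial ℂ) ^ (n + (-k).toNat)

/-- The deviations `A_{n,m} = [L_n, L_m] − (n−m)·L_{n+m}`. -/
def dev (h : ℝ) (n m : ℤ) : Module.End ℂ (Polynomial ℂ) :=
  Lop h n * Lop h m - Lop h m * Lop h n - ((n - m : ℤ) : ℂ) • Lop h (n + m)

/-- The diagonal eigenvalue `a_k(j)` of the deviation `A_{k,−k}` on the monomial `z^j`. -/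
def adiag (h : ℝ) (k : ℤ) (j : ℕ) : ℂ := ((dev h k (-k)) ((X : Polynomial ℂ) ^ j)).coeff j

/-- The weight `⟨zⁿ, zⁿ⟩ = n!·(2h)(2h+1)⋯(2h+n−1)`. -/
def wgt (h : ℝ) (n : ℕ) : ℝ := (n.factorial : ℝ) * ∏ j ∈ Finset.range n, (2 * h + (j : ℝ))

/-- The inner product of the unitarizable Verma module (`h > 0`), conjugate-linear in
the first argument. -/
def ip (h : ℝ) (p q : Polynomial ℂ) : ℂ :=
  ∑ n ∈ p.support, (starRingEnd ℂ) (p.coeff n) * q.coeff n * ((wgt h n : ℝ) : ℂ)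

/-- The associated norm. -/
def nrm (h : ℝ) (p : Polynomial ℂ) : ℝ := Real.sqrt (ip h p p).re

/-- The fundamental form `α_{i,j} = ((6h²−6h+1)/6)·(j³−j)·δ_{i+j,0}`. -/
def alphaF (h : ℝ) (i j : ℤ) : ℝ :=
  if i + j = 0 then ((6 * h ^ 2 - 6 * h + 1) / 6) * ((j : ℝ) ^ 3 - (j : ℝ)) else 0

/-- The inverse fundamental form `α^{k,−k} = −1/α_{k,−k}` (for `|k| ≥ 2`). -/
def alphaInv (h : ℝ) (k : ℤ) : ℝ := -1 / alphaF h k (-k)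


lemma wgt_pos {h : ℝ} (hh : 0 < h) (n : ℕ) : 0 < wgt h n := by
  unfold wgt
  apply mul_pos (by positivity)
  exact Finset.prod_pos fun j _ => by positivity

lemma wgt_succ (h : ℝ) (n : ℕ) :
    wgt h (n + 1) = ((n : ℝ) + 1) * (2 * h + n) * wgt h n := by
  unfold wgt
  rw [Nat.factorial_succ, Finset.prod_range_succ]
  push_cast; ring

lemma supp_sub {p : Polynomial ℂ} {N : ℕ} (hN : p.natDegree < N) :
    p.support ⊆ Finset.range N := fun n hn =>
  Finset.mem_range.mpr (lt_of_le_of_lt (Polynomial.le_natDegree_of_mem_supp n hn) hN)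

lemma ip_eq (h : ℝ) (p q : Polynomial ℂ) {N : ℕ} (hN : p.natDegree < N) :
    ip h p q = ∑ n ∈ Finset.range N,
      (starRingEnd ℂ) (p.coeff n) * q.coeff n * ((wgt h n : ℝ) : ℂ) := by
  unfold ip
  exact Finset.sum_subset (supp_sub hN) (by
    intro n _ hn
    simp [Polynomial.notMem_support_iff.mp hn])

lemma lgen_neg_one (h : ℝ) : lgen h (-1) = mulX := by norm_num [lgen]

lemma lgen_zero (h : ℝ) : lgen h 0 = mulX * der + (h : ℂ) • 1 := by norm_num [lgen]

lemma lgen_one (h : ℝ) : lgen h 1 = mulX * der * der + ((2 * h : ℝ) : ℂ) • der := by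
  norm_num [lgen]

lemma l1_coeff (h : ℝ) (q : Polynomial ℂ) (n : ℕ) :
    ((lgen h 1) q).coeff n = ((n : ℂ) + 1) * ((n : ℂ) + 2 * h) * q.coeff (n + 1) := by
  rw [lgen_one]
  simp only [LinearMap.add_apply, LinearMap.smul_apply, Module.End.mul_apply, mulX, der,
    LinearMap.mulLeft_apply, Polynomial.coeff_add, Polynomial.coeff_smul, smul_eq_mul]
  cases n with
  | zero =>
    simp [Polynomial.mul_coeff_zero, Polynomial.coeff_derivative]
  | succ m =>
    rw [Polynomial.coeff_X_mul]
    simp only [Polynomial.coeff_derivative]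
    push_cast; ring

lemma l0_coeff (h : ℝ) (q : Polynomial ℂ) (n : ℕ) :
    ((lgen h 0) q).coeff n = ((n : ℂ) + h) * q.coeff n := by
  rw [lgen_zero]
  simp only [LinearMap.add_apply, LinearMap.smul_apply, Module.End.mul_apply, mulX, der,
    LinearMap.mulLeft_apply, Module.End.one_apply, Polynomial.coeff_add, Polynomial.coeff_smul,
    smul_eq_mul]
  cases n with
  | zero => simp
  | succ m =>
    rw [Polynomial.coeff_X_mul, Polynomial.coeff_derivative]
    push_cast; ring

lemma ip_conj (h : ℝ) (p q : Polynomial ℂ) : ip h p q = (starRingEnd ℂ) (ip h q p) := by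
  have hp : p.natDegree < p.natDegree ⊔ q.natDegree + 1 := by omega
  have hq : q.natDegree < p.natDegree ⊔ q.natDegree + 1 := by omega
  rw [ip_eq h p q hp, ip_eq h q p hq, map_sum]
  refine Finset.sum_congr rfl fun n _ => ?_
  simp only [map_mul, Complex.conj_conj, Complex.conj_ofReal]
  ring

lemma contra_neg (h : ℝ) (p q : Polynomial ℂ) :
    ip h ((lgen h (-1)) p) q = ip h p ((lgen h 1) q) := by
  have hXp : ((lgen h (-1)) p).natDegree < p.natDegree + 1 + 1 := by
    rw [lgen_neg_one]
    simp only [mulX, LinearMap.mulLeft_apply]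
    calc (X * p).natDegree ≤ X.natDegree + p.natDegree := Polynomial.natDegree_mul_le
      _ < p.natDegree + 1 + 1 := by simp [Polynomial.natDegree_X]; omega
  rw [ip_eq h _ q hXp, ip_eq h p _ (Nat.lt_succ_self _), Finset.sum_range_succ']
  have h0 : ((lgen h (-1)) p).coeff 0 = 0 := by
    rw [lgen_neg_one]
    simp [mulX, Polynomial.mul_coeff_zero]
  rw [h0]
  simp only [map_zero, zero_mul, add_zero]
  refine Finset.sum_congr rfl fun n _ => ?_
  rw [lgen_neg_one]
  simp only [mulX, LinearMap.mulLeft_apply, Polynomial.coeff_X_mul, l1_coeff, wgt_succ]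
  push_cast; ring

/-- For `h > 0` the form `⟨·,·⟩` with `⟨zⁿ, zᵐ⟩ = δ_{nm}·n!·(2h)⋯(2h+n−1)`
is a positive definite inner product (sesquilinear, conjugate-symmetric, positive definite)
and is contravariant: `⟨l_i p, q⟩ = ⟨p, l_{−i} q⟩` for `i ∈ {−1,0,1}`. -/
theorem stmt16 (h : ℝ) (hh : 0 < h) :
    (∀ p p' q : Polynomial ℂ, ip h (p + p') q = ip h p q + ip h p' q) ∧
    (∀ p q q' : Polynomial ℂ, ip h p (q + q') = ip h p q + ip h p q') ∧
    (∀ (c : ℂ) (p q : Polynomial ℂ), ip h (c • p) q = (starRingEnd ℂ) c * ip h p q) ∧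
    (∀ (c : ℂ) (p q : Polynomial ℂ), ip h p (c • q) = c * ip h p q) ∧
    (∀ p q : Polynomial ℂ, ip h p q = (starRingEnd ℂ) (ip h q p)) ∧
    (∀ p : Polynomial ℂ, p ≠ 0 → 0 < (ip h p p).re ∧ (ip h p p).im = 0) ∧
    (∀ i ∈ ({-1, 0, 1} : Set ℤ), ∀ p q : Polynomial ℂ,
      ip h ((lgen h i) p) q = ip h p ((lgen h (-i)) q)) := by
  refine ⟨?_, ?_, ?_, ?_, ip_conj h, ?_, ?_⟩
  · -- additivity in first argument
    intro p p' q
    have N := p.natDegree ⊔ p'.natDegree ⊔ (p + p').natDegree + 1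
    have h1 : p.natDegree < p.natDegree ⊔ p'.natDegree ⊔ (p + p').natDegree + 1 := by omega
    have h2 : p'.natDegree < p.natDegree ⊔ p'.natDegree ⊔ (p + p').natDegree + 1 := by omega
    have h3 : (p + p').natDegree < p.natDegree ⊔ p'.natDegree ⊔ (p + p').natDegree + 1 := by
      omega
    rw [ip_eq h _ q h3, ip_eq h p q h1, ip_eq h p' q h2, ← Finset.sum_add_distrib]
    refine Finset.sum_congr rfl fun n _ => ?_
    rw [Polynomial.coeff_add, map_add]
    ring
  · -- additivity in second argument
    intro p q q'
    unfold ip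
    rw [← Finset.sum_add_distrib]
    refine Finset.sum_congr rfl fun n _ => ?_
    rw [Polynomial.coeff_add]
    ring
  · -- conjugate-homogeneity in first argument
    intro c p q
    have h1 : (c • p).natDegree < p.natDegree + 1 :=
      Nat.lt_succ_of_le (Polynomial.natDegree_smul_le c p)
    rw [ip_eq h _ q h1, ip_eq h p q (Nat.lt_succ_self _), Finset.mul_sum]
    refine Finset.sum_congr rfl fun n _ => ?_
    rw [Polynomial.coeff_smul, smul_eq_mul, map_mul]
    ring
  · -- homogeneity in second argument
    intro c p q
    unfold ip
    rw [Finset.mul_sum]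
    refine Finset.sum_congr rfl fun n _ => ?_
    rw [Polynomial.coeff_smul, smul_eq_mul]
    ring
  · -- positive definiteness
    intro p hp
    have key : ip h p p =
        ((∑ n ∈ p.support, Complex.normSq (p.coeff n) * wgt h n : ℝ) : ℂ) := by
      unfold ip
      rw [Complex.ofReal_sum]
      refine Finset.sum_congr rfl fun n _ => ?_
      rw [Complex.ofReal_mul, mul_comm ((starRingEnd ℂ) (p.coeff n)), Complex.mul_conj]
    rw [key]
    refine ⟨?_, by simp⟩
    rw [Complex.ofReal_re]
    refine Finset.sum_pos (fun n hn => ?_) (Polynomial.support_nonempty.mpr hp)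
    exact mul_pos (Complex.normSq_pos.mpr (Polynomial.mem_support_iff.mp hn)) (wgt_pos hh n)
  · -- contravariance
    intro i hi p q
    simp only [Set.mem_insert_iff, Set.mem_singleton_iff] at hi
    rcases hi with rfl | rfl | rfl
    · simpa using contra_neg h p q
    · -- i = 0
      show ip h ((lgen h 0) p) q = ip h p ((lgen h (-0)) q)
      rw [neg_zero]
      have h1 : ((lgen h 0) p).natDegree < p.natDegree + 1 := by
        refine Nat.lt_succ_of_le (Polynomial.natDegree_le_iff_coeff_eq_zero.mpr fun m hm => ?_)
        rw [l0_coeff, Polynomial.coeff_eq_zero_of_natDegree_lt hm, mul_zero]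
      rw [ip_eq h _ q h1, ip_eq h p _ (Nat.lt_succ_self _)]
      refine Finset.sum_congr rfl fun n _ => ?_
      rw [l0_coeff, l0_coeff, map_mul]
      have : (starRingEnd ℂ) ((n : ℂ) + h) = (n : ℂ) + h := by
        simp [map_add, Complex.conj_ofReal]
      rw [this]
      ring
    · -- i = 1
      show ip h ((lgen h 1) p) q = ip h p ((lgen h (-1)) q)
      rw [ip_conj h ((lgen h 1) p) q, ← contra_neg h q p, ← ip_conj h]
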